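/- arXiv:1704.02748 — 5 statements merged into one kernel-verified Lean document; each statement's English description precedes it below -/
import Mathlib

section
/- Let K and L be integers with 2 ≤ L ≤ K, let T > 0, and let b_0, …, b_{L−1} be nonnegative reals. Then the optimal worst-case objective sup over α ∈ ℝ^L with α_0 = 0 of (inf over ψ ∈ ℝ^L of J(α, ψ)) is at least K·∑_{l=0}^{L−1} b_l². -/
open Real Finset

/-- The objective function `J(α, ψ)` from the paper:
`J = K·∑ b_l² + 2·∑_{l<m} b_l b_m ∑_{k=0}^{K-1} cos((ψ_m − ψ_l) − (α_m − α_l)·k·T)`. -/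
noncomputable def J (K L : ℕ) (T : ℝ) (b α ψ : Fin L → ℝ) : ℝ :=
  K * ∑ l, (b l) ^ 2 +
    2 * ∑ l, ∑ m ∈ Finset.Ioi l,
      b l * b m * ∑ k ∈ Finset.range K,
        Real.cos ((ψ m - ψ l) - (α m - α l) * (k : ℝ) * T)

lemma sum_cos_arith (K : ℕ) (c θ : ℝ)
    (hz : Complex.exp (Complex.I * c) ≠ 1)
    (hzK : Complex.exp (Complex.I * c) ^ K = 1) :
    ∑ k ∈ Finset.range K, Real.cos (θ + c * k) = 0 := by
  have key : ∀ k : ℕ, Real.cos (θ + c * k)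
      = (Complex.exp (θ * Complex.I) * (Complex.exp (Complex.I * c)) ^ k).re := by
    intro k
    rw [← Complex.exp_ofReal_mul_I_re]
    congr 1
    rw [← Complex.exp_nat_mul, ← Complex.exp_add]
    push_cast
    ring_nf
  simp only [key]
  rw [← Complex.re_sum, ← Finset.mul_sum, geom_sum_eq hz, hzK]
  simp

lemma sum_cos_special (K : ℕ) (hK : 0 < K) (j : ℕ) (hj0 : 0 < j) (hjK : j < K) (θ : ℝ) :
    ∑ k ∈ Finset.range K, Real.cos (θ + (-(2 * π * j / K)) * k) = 0 := by
  apply sum_cos_arith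
  · intro h
    rw [Complex.exp_eq_one_iff] at h
    obtain ⟨n, hn⟩ := h
    have h2 : Complex.I * (-(2 * π * j / K) : ℝ) = Complex.I * ((n : ℝ) * (2 * π)) := by
      rw [hn]; push_cast; ring
    have h3 : (-(2 * π * j / K) : ℝ) = (n : ℝ) * (2 * π) := by
      have := mul_left_cancel₀ Complex.I_ne_zero h2
      exact_mod_cast this
    have hKne : (K : ℝ) ≠ 0 := by positivity
    have hπ : (0:ℝ) < π := Real.pi_pos
    have h4 : (j : ℝ) = -(n : ℝ) * K := by
      field_simp at h3
      nlinarith [h3]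
    have h5 : (j : ℤ) = -n * K := by exact_mod_cast h4
    have hj1 : (0 : ℤ) < j := by exact_mod_cast hj0
    have hj2 : (j : ℤ) < K := by exact_mod_cast hjK
    rcases lt_trichotomy n 0 with h | h | h
    · nlinarith
    · rw [h] at h5; simp at h5; omega
    · nlinarith
  · rw [← Complex.exp_nat_mul]
    have : (K : ℂ) * (Complex.I * (-(2 * π * j / K) : ℝ)) = (-(j:ℤ) : ℂ) * (2 * π * Complex.I) := by
      have hKne : (K : ℂ) ≠ 0 := by exact_mod_cast Nat.cast_ne_zero.mpr hK.ne'
      push_cast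
      field_simp
    rw [this]
    exact_mod_cast Complex.exp_int_mul_two_pi_mul_I (-(j:ℤ))

/-- for `2 ≤ L ≤ K`, `T > 0`, nonnegative `b`, the optimal worst-case
objective `sup_{α, α₀ = 0} inf_ψ J(α, ψ)` is at least `K·∑ b_l²`. -/
theorem stmt_0 (K L : ℕ) (hL : 2 ≤ L) (hLK : L ≤ K) (T : ℝ) (hT : 0 < T)
    (b : Fin L → ℝ) (hb : ∀ l, 0 ≤ b l) :
    (K : ℝ) * ∑ l, (b l) ^ 2 ≤
      sSup {v : ℝ | ∃ α : Fin L → ℝ, α ⟨0, by omega⟩ = 0 ∧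
        v = ⨅ ψ : Fin L → ℝ, J K L T b α ψ} := by
  have hK : 0 < K := by omega
  set α : Fin L → ℝ := fun l => 2 * π * (l : ℕ) / ((K : ℝ) * T) with hα
  -- with this α, J is constant in ψ
  have hconst : ∀ ψ : Fin L → ℝ, J K L T b α ψ = (K : ℝ) * ∑ l, (b l) ^ 2 := by
    intro ψ
    have hzero : ∀ l : Fin L, ∀ m ∈ Finset.Ioi l,
        b l * b m * ∑ k ∈ Finset.range K,
          Real.cos ((ψ m - ψ l) - (α m - α l) * (k : ℝ) * T) = 0 := by
      intro l m hm
      rw [Finset.mem_Ioi] at hm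
      have hlm : (l : ℕ) < (m : ℕ) := hm
      set j : ℕ := (m : ℕ) - (l : ℕ) with hj
      have hj0 : 0 < j := by omega
      have hjK : j < K := by
        have : (m : ℕ) < L := m.isLt
        omega
      have harg : ∀ k : ℕ, (ψ m - ψ l) - (α m - α l) * (k : ℝ) * T
          = (ψ m - ψ l) + (-(2 * π * j / K)) * k := by
        intro k
        have hKT : (K : ℝ) * T ≠ 0 := by positivity
        have hcast : ((m : ℕ) : ℝ) - ((l : ℕ) : ℝ) = (j : ℝ) := by
          rw [hj]; push_cast [Nat.cast_sub hlm.le]; ring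
        have h1 : α m - α l = 2 * π * (j : ℝ) / ((K : ℝ) * T) := by
          rw [hα]
          simp only
          rw [div_sub_div_same]
          congr 1
          linear_combination (2 * π) * hcast
        rw [h1]
        have hK0 : (K : ℝ) ≠ 0 := by positivity
        have hT0 : T ≠ 0 := hT.ne'
        field_simp
        ring
      have := sum_cos_special K hK j hj0 hjK (ψ m - ψ l)
      rw [show (∑ k ∈ Finset.range K,
          Real.cos ((ψ m - ψ l) - (α m - α l) * (k : ℝ) * T)) =
          ∑ k ∈ Finset.range K, Real.cos ((ψ m - ψ l) + (-(2 * π * j / K)) * k) from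
        Finset.sum_congr rfl (fun k _ => by rw [harg k]), this, mul_zero]
    unfold J
    rw [Finset.sum_congr rfl (fun l _ => Finset.sum_eq_zero (hzero l))]
    simp
  have hα0 : α ⟨0, by omega⟩ = 0 := by simp [hα]
  have hinf : (⨅ ψ : Fin L → ℝ, J K L T b α ψ) = (K : ℝ) * ∑ l, (b l) ^ 2 := by
    simp only [hconst]
    exact ciInf_const
  have hmem : ((K : ℝ) * ∑ l, (b l) ^ 2) ∈
      {v : ℝ | ∃ α : Fin L → ℝ, α ⟨0, by omega⟩ = 0 ∧
        v = ⨅ ψ : Fin L → ℝ, J K L T b α ψ} := ⟨α, hα0, hinf.symm⟩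
  -- the set is bounded above
  have hbdd : BddAbove {v : ℝ | ∃ α : Fin L → ℝ, α ⟨0, by omega⟩ = 0 ∧
      v = ⨅ ψ : Fin L → ℝ, J K L T b α ψ} := by
    refine ⟨(K : ℝ) * ∑ l, (b l) ^ 2 + 2 * ∑ l, ∑ m ∈ Finset.Ioi l, b l * b m * K, ?_⟩
    rintro v ⟨β, -, rfl⟩
    have hJle : ∀ ψ : Fin L → ℝ, J K L T b β ψ ≤
        (K : ℝ) * ∑ l, (b l) ^ 2 + 2 * ∑ l, ∑ m ∈ Finset.Ioi l, b l * b m * K := by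
      intro ψ
      unfold J
      gcongr with l hl m hm
      · exact mul_nonneg (hb l) (hb m)
      · calc ∑ k ∈ Finset.range K,
            Real.cos ((ψ m - ψ l) - (β m - β l) * (k : ℝ) * T)
            ≤ ∑ k ∈ Finset.range K, 1 :=
              Finset.sum_le_sum (fun k _ => Real.cos_le_one _)
          _ = K := by simp
    have hJge : ∀ ψ : Fin L → ℝ,
        (K : ℝ) * ∑ l, (b l) ^ 2 - 2 * ∑ l, ∑ m ∈ Finset.Ioi l, b l * b m * K
          ≤ J K L T b β ψ := by
      intro ψ
      unfold J
      rw [sub_le_iff_le_add]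
      have : ∀ l : Fin L, ∀ m ∈ Finset.Ioi l,
          -(b l * b m * K) ≤ b l * b m * ∑ k ∈ Finset.range K,
            Real.cos ((ψ m - ψ l) - (β m - β l) * (k : ℝ) * T) := by
        intro l m _
        have h1 : -(K : ℝ) ≤ ∑ k ∈ Finset.range K,
            Real.cos ((ψ m - ψ l) - (β m - β l) * (k : ℝ) * T) := by
          calc (-(K : ℝ)) = ∑ k ∈ Finset.range K, (-1 : ℝ) := by simp
            _ ≤ _ := Finset.sum_le_sum (fun k _ => Real.neg_one_le_cos _)
        nlinarith [mul_nonneg (hb l) (hb m), mul_le_mul_of_nonneg_left h1 (mul_nonneg (hb l) (hb m))]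
      have hsum : -(∑ l, ∑ m ∈ Finset.Ioi l, b l * b m * (K:ℝ))
          ≤ ∑ l, ∑ m ∈ Finset.Ioi l, b l * b m * ∑ k ∈ Finset.range K,
              Real.cos ((ψ m - ψ l) - (β m - β l) * (k : ℝ) * T) := by
        rw [← Finset.sum_neg_distrib]
        refine Finset.sum_le_sum (fun l _ => ?_)
        rw [← Finset.sum_neg_distrib]
        exact Finset.sum_le_sum (this l)
      nlinarith [hsum]
    have hbb : BddBelow (Set.range (fun ψ : Fin L → ℝ => J K L T b β ψ)) := by
      refine ⟨(K : ℝ) * ∑ l, (b l) ^ 2 - 2 * ∑ l, ∑ m ∈ Finset.Ioi l, b l * b m * K, ?_⟩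
      rintro x ⟨ψ, rfl⟩
      exact hJge ψ
    calc (⨅ ψ : Fin L → ℝ, J K L T b β ψ) ≤ J K L T b β 0 := ciInf_le hbb 0
      _ ≤ _ := hJle 0
  exact le_csSup hbdd hmem
end

section
/- Let K and L be integers with 2 ≤ L ≤ K, let T > 0, and let b_0, …, b_{L−1} be nonnegative reals. If the rates of phase shift are chosen as α_l = 2πl/(KT) for l = 0, 1, …, L−1, then for every ψ ∈ ℝ^L the objective satisfies J(α, ψ) = K·∑_{l=0}^{L−1} b_l²; in particular the value of the objective is independent of ψ. -/
open Real Finset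

lemma sum_cos_eq_zero (K d : ℕ) (hd : 0 < d) (hdK : d < K) (c : ℝ) :
    ∑ k ∈ Finset.range K, Real.cos (c - 2 * Real.pi * d / K * k) = 0 := by
  have hK : 0 < K := lt_trans hd hdK
  have hKR : (K : ℝ) ≠ 0 := Nat.cast_ne_zero.mpr hK.ne'
  have hKC : (K : ℂ) ≠ 0 := Nat.cast_ne_zero.mpr hK.ne'
  set θ : ℝ := 2 * Real.pi * d / K with hθ
  set ζ : ℂ := Complex.exp (-(θ : ℂ) * Complex.I) with hζ
  have hζ1 : ζ ≠ 1 := by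
    rw [hζ, Ne, Complex.exp_eq_one_iff]
    rintro ⟨n, hn⟩
    have h1 : (-(θ : ℝ) : ℂ) = (n : ℂ) * (2 * (π : ℂ)) := by
      apply mul_right_cancel₀ Complex.I_ne_zero
      push_cast
      linear_combination hn
    have h2 : -(θ : ℝ) = n * (2 * π) := by exact_mod_cast h1
    have h3 : (d : ℝ) = (-n : ℝ) * K := by
      field_simp [hθ] at h2
      rw [hθ] at h2
      field_simp at h2
      nlinarith [Real.pi_pos]
    have h4 : (d : ℤ) = -n * K := by exact_mod_cast h3
    have hdvd : (K : ℤ) ∣ (d : ℤ) := ⟨-n, by linarith⟩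
    have := Int.le_of_dvd (by exact_mod_cast hd) hdvd
    omega
  have hζK : ζ ^ K = 1 := by
    rw [hζ, ← Complex.exp_nat_mul, Complex.exp_eq_one_iff]
    refine ⟨-d, ?_⟩
    have hKθ : (K : ℂ) * (θ : ℂ) = 2 * π * d := by
      push_cast [hθ]
      rw [mul_div_assoc', mul_comm, mul_div_assoc, div_self hKC, mul_one]
    push_cast
    linear_combination -Complex.I * hKθ
  have key : ∑ k ∈ Finset.range K, Real.cos (c - θ * k)
      = (Complex.exp ((c : ℂ) * Complex.I) * ∑ k ∈ Finset.range K, ζ ^ k).re := by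
    rw [Finset.mul_sum, Complex.re_sum]
    refine Finset.sum_congr rfl fun k _ => ?_
    rw [hζ, ← Complex.exp_nat_mul, ← Complex.exp_add]
    have : (c : ℂ) * Complex.I + (k : ℂ) * (-(θ : ℂ) * Complex.I)
        = ((c - θ * k : ℝ) : ℂ) * Complex.I := by push_cast; ring
    rw [this, Complex.exp_ofReal_mul_I_re]
  rw [key, geom_sum_eq hζ1, hζK]
  simp
/-- with the rates of phase shift `α_l = 2πl/(KT)`, the objective equals
`K·∑ b_l²` for every `ψ`, i.e., it is independent of `ψ`. -/
theorem stmt_1 (K L : ℕ) (hL : 2 ≤ L) (hLK : L ≤ K) (T : ℝ) (hT : 0 < T)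
    (b : Fin L → ℝ) (hb : ∀ l, 0 ≤ b l) :
    ∀ ψ : Fin L → ℝ,
      J K L T b (fun l => 2 * Real.pi * (l : ℝ) / (K * T)) ψ =
        (K : ℝ) * ∑ l, (b l) ^ 2 := by
  intro ψ
  have hK : 0 < K := lt_of_lt_of_le (by omega) hLK
  have hKR : (K : ℝ) ≠ 0 := Nat.cast_ne_zero.mpr hK.ne'
  unfold J
  have hzero : ∀ l : Fin L, ∀ m ∈ Finset.Ioi l,
      b l * b m * ∑ k ∈ Finset.range K,
        Real.cos ((ψ m - ψ l) -
          (2 * Real.pi * (m : ℝ) / (K * T) - 2 * Real.pi * (l : ℝ) / (K * T)) * (k : ℝ) * T)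
        = 0 := by
    intro l m hm
    rw [Finset.mem_Ioi] at hm
    have hlm : (l : ℕ) < (m : ℕ) := hm
    set d : ℕ := (m : ℕ) - (l : ℕ) with hd
    have hd0 : 0 < d := by omega
    have hdK : d < K := by
      have := m.isLt; omega
    have hdR : (d : ℝ) = (m : ℝ) - (l : ℝ) := by
      push_cast [hd]
      rw [Nat.cast_sub hlm.le]
    have : ∑ k ∈ Finset.range K,
        Real.cos ((ψ m - ψ l) -
          (2 * Real.pi * (m : ℝ) / (K * T) - 2 * Real.pi * (l : ℝ) / (K * T)) * (k : ℝ) * T)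
        = ∑ k ∈ Finset.range K,
          Real.cos ((ψ m - ψ l) - 2 * Real.pi * d / K * k) := by
      refine Finset.sum_congr rfl fun k _ => ?_
      congr 1
      rw [hdR]
      field_simp
    rw [this, sum_cos_eq_zero K d hd0 hdK]
    ring
  rw [Finset.sum_congr rfl fun l _ => Finset.sum_eq_zero (hzero l)]
  simp
end

section
/- Let K ≥ 2 be an integer, T > 0, and let b_0, b_1 be nonnegative reals. Then sup over α_1 ∈ ℝ of (inf over ψ_0, ψ_1 ∈ ℝ of K·(b_0² + b_1²) + 2·b_0·b_1·∑_{k=0}^{K−1} cos((ψ_1 − ψ_0) − α_1·k·T)) equals K·(b_0² + b_1²). That is, for L = 2 antennas the lower bound K·∑_l b_l² on the optimal worst-case objective is tight. -/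
open Real Finset

lemma sum_cexp_zero (K : ℕ) (hK : 2 ≤ K) :
    ∑ k ∈ Finset.range K, Complex.exp (-(2 * Real.pi * Complex.I) * k / K) = 0 := by
  have hKne : (K : ℂ) ≠ 0 := Nat.cast_ne_zero.mpr (by omega)
  have h2pi : (2 * (Real.pi : ℂ) * Complex.I) ≠ 0 := by
    simp [Real.pi_ne_zero, Complex.I_ne_zero]
  have hω : ∀ k : ℕ, Complex.exp (-(2 * Real.pi * Complex.I) * k / K)
      = (Complex.exp (-(2 * Real.pi * Complex.I) / K)) ^ k := by
    intro k
    rw [← Complex.exp_nat_mul]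
    ring_nf
  simp only [hω]
  have hne : Complex.exp (-(2 * Real.pi * Complex.I) / K) ≠ 1 := by
    intro h
    rw [Complex.exp_eq_one_iff] at h
    obtain ⟨n, hn⟩ := h
    have hc : (-1 : ℂ) * (2 * Real.pi * Complex.I) = (n * K) * (2 * Real.pi * Complex.I) := by
      field_simp at hn ⊢
      linear_combination hn
    have hc2 : (-1 : ℂ) = n * K := mul_right_cancel₀ h2pi hc
    have hz : (-1 : ℤ) = n * K := by exact_mod_cast hc2
    have : (K : ℤ) ∣ 1 := ⟨-n, by linarith⟩
    have := Int.le_of_dvd (by norm_num) this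
    omega
  rw [geom_sum_eq hne]
  have hωK : Complex.exp (-(2 * Real.pi * Complex.I) / K) ^ K = 1 := by
    rw [← Complex.exp_nat_mul,
      show (K : ℂ) * (-(2 * Real.pi * Complex.I) / K) = ((-1 : ℤ) : ℂ) * (2 * Real.pi * Complex.I) by
        field_simp; ring]
    exact Complex.exp_int_mul_two_pi_mul_I (-1)
  rw [hωK]
  simp

lemma sum_cos_zero (K : ℕ) (hK : 2 ≤ K) (δ : ℝ) :
    ∑ k ∈ Finset.range K, Real.cos (δ - 2 * Real.pi * k / K) = 0 := by
  have h : ∑ k ∈ Finset.range K, Real.cos (δ - 2 * Real.pi * k / K)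
      = (Complex.exp ((δ : ℂ) * Complex.I) *
          ∑ k ∈ Finset.range K, Complex.exp (-(2 * Real.pi * Complex.I) * k / K)).re := by
    rw [Finset.mul_sum, Complex.re_sum]
    refine Finset.sum_congr rfl fun k _ => ?_
    rw [← Complex.exp_add, ← Complex.exp_ofReal_mul_I_re]
    congr 2
    push_cast
    ring
  rw [h, sum_cexp_zero K hK, mul_zero, Complex.zero_re]

/-- for `L = 2` antennas, the optimal worst-case objective
`sup_{α₁} inf_{ψ₀,ψ₁} [K·(b₀² + b₁²) + 2·b₀·b₁·∑_{k<K} cos((ψ₁−ψ₀) − α₁·k·T)]`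
equals `K·(b₀² + b₁²)`, i.e., the lower bound is tight. -/
theorem stmt_2 (K : ℕ) (hK : 2 ≤ K) (T : ℝ) (hT : 0 < T)
    (b₀ b₁ : ℝ) (hb₀ : 0 ≤ b₀) (hb₁ : 0 ≤ b₁) :
    sSup {v : ℝ | ∃ α₁ : ℝ,
        v = ⨅ ψ : ℝ × ℝ,
          ((K : ℝ) * (b₀ ^ 2 + b₁ ^ 2) +
            2 * b₀ * b₁ * ∑ k ∈ Finset.range K,
              Real.cos ((ψ.2 - ψ.1) - α₁ * (k : ℝ) * T))} =
      (K : ℝ) * (b₀ ^ 2 + b₁ ^ 2) := by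
  set C : ℝ := (K : ℝ) * (b₀ ^ 2 + b₁ ^ 2) with hC
  have hbb : (0 : ℝ) ≤ 2 * b₀ * b₁ := by positivity
  set g : ℝ → ℝ × ℝ → ℝ := fun α ψ =>
    C + 2 * b₀ * b₁ * ∑ k ∈ Finset.range K,
      Real.cos ((ψ.2 - ψ.1) - α * (k : ℝ) * T) with hg
  have hsumlb : ∀ (α : ℝ) (ψ : ℝ × ℝ),
      -(K : ℝ) ≤ ∑ k ∈ Finset.range K, Real.cos ((ψ.2 - ψ.1) - α * (k : ℝ) * T) := by
    intro α ψ
    have := Finset.sum_le_sum (f := fun _ : ℕ => (-1 : ℝ))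
      (g := fun k : ℕ => Real.cos ((ψ.2 - ψ.1) - α * (k : ℝ) * T))
      (s := Finset.range K) (fun k _ => Real.neg_one_le_cos _)
    simpa using this
  have hbdd : ∀ α : ℝ, BddBelow (Set.range (g α)) := by
    intro α
    refine ⟨C - 2 * b₀ * b₁ * K, ?_⟩
    rintro x ⟨ψ, rfl⟩
    have h1 := hsumlb α ψ
    have h2 := mul_le_mul_of_nonneg_left h1 hbb
    simp only [hg]
    nlinarith
  have hub : ∀ v ∈ {v : ℝ | ∃ α₁ : ℝ, v = ⨅ ψ : ℝ × ℝ,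
      (C + 2 * b₀ * b₁ * ∑ k ∈ Finset.range K,
        Real.cos ((ψ.2 - ψ.1) - α₁ * (k : ℝ) * T))}, v ≤ C := by
    rintro v ⟨α, rfl⟩
    set s : ℝ := ∑ k ∈ Finset.range K, Real.cos (((0:ℝ) - (0:ℝ)) - α * (k : ℝ) * T) with hs
    by_cases hle : s ≤ 0
    · calc (⨅ ψ : ℝ × ℝ, g α ψ) ≤ g α ((0 : ℝ), (0 : ℝ)) := ciInf_le (hbdd α) _
        _ = C + 2 * b₀ * b₁ * s := rfl
        _ ≤ C := by nlinarith [mul_le_mul_of_nonneg_left hle hbb]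
    · have hπ : g α ((0 : ℝ), Real.pi) = C + 2 * b₀ * b₁ * (-s) := by
        simp only [hg, hs]
        have : ∀ k : ℕ, Real.cos (Real.pi - 0 - α * (k : ℝ) * T)
            = - Real.cos ((0:ℝ) - 0 - α * (k : ℝ) * T) := by
          intro k
          rw [show Real.pi - 0 - α * (k : ℝ) * T = Real.pi - α * (k : ℝ) * T by ring,
            Real.cos_pi_sub,
            show (0:ℝ) - 0 - α * (k : ℝ) * T = -(α * (k : ℝ) * T) by ring, Real.cos_neg]
        rw [Finset.sum_congr rfl fun k _ => this k, Finset.sum_neg_distrib]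
      calc (⨅ ψ : ℝ × ℝ, g α ψ) ≤ g α ((0 : ℝ), Real.pi) := ciInf_le (hbdd α) _
        _ = C + 2 * b₀ * b₁ * (-s) := hπ
        _ ≤ C := by nlinarith
  have hmem : C ∈ {v : ℝ | ∃ α₁ : ℝ, v = ⨅ ψ : ℝ × ℝ,
      (C + 2 * b₀ * b₁ * ∑ k ∈ Finset.range K,
        Real.cos ((ψ.2 - ψ.1) - α₁ * (k : ℝ) * T))} := by
    refine ⟨2 * Real.pi / ((K : ℝ) * T), ?_⟩
    have hKne : (K : ℝ) ≠ 0 := Nat.cast_ne_zero.mpr (by omega)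
    have hconst : ∀ ψ : ℝ × ℝ,
        (C + 2 * b₀ * b₁ * ∑ k ∈ Finset.range K,
          Real.cos ((ψ.2 - ψ.1) - (2 * Real.pi / ((K : ℝ) * T)) * (k : ℝ) * T)) = C := by
      intro ψ
      have harg : ∀ k : ℕ, (ψ.2 - ψ.1) - (2 * Real.pi / ((K : ℝ) * T)) * (k : ℝ) * T
          = (ψ.2 - ψ.1) - 2 * Real.pi * k / K := by
        intro k
        field_simp
      rw [show (∑ k ∈ Finset.range K,
          Real.cos ((ψ.2 - ψ.1) - (2 * Real.pi / ((K : ℝ) * T)) * (k : ℝ) * T))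
          = ∑ k ∈ Finset.range K, Real.cos ((ψ.2 - ψ.1) - 2 * Real.pi * k / K) from
        Finset.sum_congr rfl fun k _ => by rw [harg k]]
      rw [sum_cos_zero K hK (ψ.2 - ψ.1)]
      ring
    rw [iInf_congr hconst, ciInf_const]
  exact le_antisymm (csSup_le ⟨C, hmem⟩ hub) (le_csSup ⟨C, fun v hv => hub v hv⟩ hmem)
end

section
/- Let K ≥ 3 be an integer, T > 0, and let b_0, b_1, b_2 be nonnegative reals. Then sup over (α_1, α_2) ∈ ℝ² of (inf over (ψ_0, ψ_1, ψ_2) ∈ ℝ³ of K·(b_0² + b_1² + b_2²) + 2·∑_{0 ≤ l < m ≤ 2} b_l b_m · ∑_{k=0}^{K−1} cos((ψ_m − ψ_l) − (α_m − α_l)·k·T), with α_0 = 0) equals K·(b_0² + b_1² + b_2²). That is, for L = 3 antennas the lower bound K·∑_l b_l² on the optimal worst-case objective is tight. -/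
open Real Finset


lemma exp_ne_one_of_pos_lt {r : ℝ} (h0 : 0 < r) (h2 : r < 2 * Real.pi) :
    Complex.exp ((r:ℂ) * Complex.I) ≠ 1 := by
  intro h
  obtain ⟨n, hn⟩ := Complex.exp_eq_one_iff.mp h
  have him : r = (n:ℝ) * (2 * Real.pi) := by
    have := congrArg Complex.im hn
    simpa using this
  have hpi := Real.pi_pos
  have hn0 : 0 < (n:ℝ) := by nlinarith
  have hn1 : (1:ℝ) ≤ (n:ℝ) := by exact_mod_cast (by exact_mod_cast hn0 : (0:ℤ) < n)
  nlinarith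

lemma sum_cos_zero_s3 (K : ℕ) (a ψ : ℝ)
    (h1 : Complex.exp ((a:ℂ) * Complex.I) ≠ 1)
    (h2 : Complex.exp (((K:ℝ) * a : ℝ) * Complex.I) = 1) :
    ∑ k ∈ Finset.range K, Real.cos (ψ - a * k) = 0 := by
  set z : ℂ := Complex.exp ((a:ℂ) * Complex.I) with hz
  have hzK : z ^ K = 1 := by
    rw [hz, ← Complex.exp_nat_mul, ← h2]
    push_cast
    ring_nf
  have hgeom : ∑ k ∈ Finset.range K, z ^ k = 0 := by
    rw [geom_sum_eq h1, hzK]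
    simp
  have key : ∑ k ∈ Finset.range K, Real.cos (ψ - a * k) =
      (Complex.exp ((-ψ : ℂ) * Complex.I) * ∑ k ∈ Finset.range K, z ^ k).re := by
    rw [Finset.mul_sum, Complex.re_sum]
    apply Finset.sum_congr rfl
    intro k _
    rw [hz, ← Complex.exp_nat_mul, ← Complex.exp_add]
    have : (-ψ : ℂ) * Complex.I + (k:ℂ) * ((a:ℂ) * Complex.I) = ((a * k - ψ : ℝ) : ℂ) * Complex.I := by
      push_cast; ring
    rw [this, Complex.exp_ofReal_mul_I_re]
    rw [show ψ - a * k = -(a * k - ψ) by ring, Real.cos_neg]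
  rw [key, hgeom, mul_zero, Complex.zero_re]

lemma sum_cos_zero_m (K : ℕ) (hK : 3 ≤ K) (m : ℕ) (hm1 : 1 ≤ m) (hm2 : m ≤ 2) (ψ : ℝ) :
    ∑ k ∈ Finset.range K, Real.cos (ψ - (2 * Real.pi * m / K) * k) = 0 := by
  have hK0 : (0:ℝ) < K := by exact_mod_cast (by omega : 0 < K)
  have hm0 : (0:ℝ) < m := by exact_mod_cast hm1
  have hmK : (m:ℝ) < K := by exact_mod_cast (by omega : m < K)
  have hpi := Real.pi_pos
  apply sum_cos_zero_s3
  · apply exp_ne_one_of_pos_lt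
    · positivity
    · rw [div_lt_iff₀ hK0]; nlinarith
  · have h : (K:ℝ) * (2 * Real.pi * m / K) = 2 * Real.pi * m := by field_simp
    rw [h]
    have := Complex.exp_int_mul_two_pi_mul_I (m:ℤ)
    rw [← this]
    congr 1
    push_cast
    ring

lemma four_cos (θ : ℝ) :
    Real.cos ((0:ℝ) - 0 - θ) + Real.cos ((π:ℝ) - 0 - θ) + Real.cos ((0:ℝ) - π - θ)
      + Real.cos ((π:ℝ) - π - θ) = 0 := by
  simp [Real.cos_sub, Real.cos_pi, Real.sin_pi]

lemma two_cos (θ : ℝ) :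
    Real.cos ((0:ℝ) - 0 - θ) + Real.cos ((π:ℝ) - 0 - θ) = 0 := by
  simp [Real.cos_sub, Real.cos_pi, Real.sin_pi]

lemma neg_card_le_sum_cos (K : ℕ) (f : ℕ → ℝ) :
    -(K:ℝ) ≤ ∑ k ∈ Finset.range K, Real.cos (f k) := by
  calc -(K:ℝ) = ∑ k ∈ Finset.range K, (-1 : ℝ) := by simp
  _ ≤ _ := Finset.sum_le_sum (fun k _ => Real.neg_one_le_cos (f k))

/-- for `L = 3` antennas (with `α₀ = 0`), the optimal worst-case objective
`sup_{(α₁,α₂)} inf_{(ψ₀,ψ₁,ψ₂)} [K·(b₀²+b₁²+b₂²) + 2·∑_{l<m} b_l b_m ∑_{k<K}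
cos((ψ_m−ψ_l) − (α_m−α_l)·k·T)]` equals `K·(b₀²+b₁²+b₂²)`, i.e., the lower bound is tight. -/
theorem stmt_3 (K : ℕ) (hK : 3 ≤ K) (T : ℝ) (hT : 0 < T)
    (b₀ b₁ b₂ : ℝ) (hb₀ : 0 ≤ b₀) (hb₁ : 0 ≤ b₁) (hb₂ : 0 ≤ b₂) :
    sSup {v : ℝ | ∃ α : ℝ × ℝ,
        v = ⨅ ψ : ℝ × ℝ × ℝ,
          ((K : ℝ) * (b₀ ^ 2 + b₁ ^ 2 + b₂ ^ 2) +
            2 * (b₀ * b₁ * ∑ k ∈ Finset.range K,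
                    Real.cos ((ψ.2.1 - ψ.1) - (α.1 - 0) * (k : ℝ) * T) +
                 b₀ * b₂ * ∑ k ∈ Finset.range K,
                    Real.cos ((ψ.2.2 - ψ.1) - (α.2 - 0) * (k : ℝ) * T) +
                 b₁ * b₂ * ∑ k ∈ Finset.range K,
                    Real.cos ((ψ.2.2 - ψ.2.1) - (α.2 - α.1) * (k : ℝ) * T)))} =
      (K : ℝ) * (b₀ ^ 2 + b₁ ^ 2 + b₂ ^ 2) := by
  have hT0 : T ≠ 0 := ne_of_gt hT
  have hK0 : (K:ℝ) ≠ 0 := by positivity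
  set C : ℝ := (K : ℝ) * (b₀ ^ 2 + b₁ ^ 2 + b₂ ^ 2) with hC
  -- membership: the good α
  have hmem : C ∈ {v : ℝ | ∃ α : ℝ × ℝ,
        v = ⨅ ψ : ℝ × ℝ × ℝ,
          ((K : ℝ) * (b₀ ^ 2 + b₁ ^ 2 + b₂ ^ 2) +
            2 * (b₀ * b₁ * ∑ k ∈ Finset.range K,
                    Real.cos ((ψ.2.1 - ψ.1) - (α.1 - 0) * (k : ℝ) * T) +
                 b₀ * b₂ * ∑ k ∈ Finset.range K,
                    Real.cos ((ψ.2.2 - ψ.1) - (α.2 - 0) * (k : ℝ) * T) +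
                 b₁ * b₂ * ∑ k ∈ Finset.range K,
                    Real.cos ((ψ.2.2 - ψ.2.1) - (α.2 - α.1) * (k : ℝ) * T)))} := by
    refine ⟨(2 * π / (K * T), 4 * π / (K * T)), ?_⟩
    have hconst : ∀ ψ : ℝ × ℝ × ℝ,
        ((K : ℝ) * (b₀ ^ 2 + b₁ ^ 2 + b₂ ^ 2) +
            2 * (b₀ * b₁ * ∑ k ∈ Finset.range K,
                    Real.cos ((ψ.2.1 - ψ.1) - (2 * π / (K * T) - 0) * (k : ℝ) * T) +
                 b₀ * b₂ * ∑ k ∈ Finset.range K,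
                    Real.cos ((ψ.2.2 - ψ.1) - (4 * π / (K * T) - 0) * (k : ℝ) * T) +
                 b₁ * b₂ * ∑ k ∈ Finset.range K,
                    Real.cos ((ψ.2.2 - ψ.2.1) -
                      (4 * π / (K * T) - 2 * π / (K * T)) * (k : ℝ) * T))) = C := by
      intro ψ
      have s1 : ∑ k ∈ Finset.range K,
          Real.cos ((ψ.2.1 - ψ.1) - (2 * π / (K * T) - 0) * (k : ℝ) * T) = 0 := by
        rw [show (fun k : ℕ => Real.cos ((ψ.2.1 - ψ.1) - (2 * π / (K * T) - 0) * (k : ℝ) * T))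
          = fun k : ℕ => Real.cos ((ψ.2.1 - ψ.1) - (2 * Real.pi * (1:ℕ) / K) * k) from
          funext fun k => by congr 1; push_cast; field_simp; ring]
        exact sum_cos_zero_m K hK 1 le_rfl (by omega) _
      have s2 : ∑ k ∈ Finset.range K,
          Real.cos ((ψ.2.2 - ψ.1) - (4 * π / (K * T) - 0) * (k : ℝ) * T) = 0 := by
        rw [show (fun k : ℕ => Real.cos ((ψ.2.2 - ψ.1) - (4 * π / (K * T) - 0) * (k : ℝ) * T))
          = fun k : ℕ => Real.cos ((ψ.2.2 - ψ.1) - (2 * Real.pi * (2:ℕ) / K) * k) from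
          funext fun k => by congr 1; push_cast; field_simp; ring]
        exact sum_cos_zero_m K hK 2 (by omega) le_rfl _
      have s3 : ∑ k ∈ Finset.range K,
          Real.cos ((ψ.2.2 - ψ.2.1) - (4 * π / (K * T) - 2 * π / (K * T)) * (k : ℝ) * T) = 0 := by
        rw [show (fun k : ℕ => Real.cos ((ψ.2.2 - ψ.2.1) -
              (4 * π / (K * T) - 2 * π / (K * T)) * (k : ℝ) * T))
          = fun k : ℕ => Real.cos ((ψ.2.2 - ψ.2.1) - (2 * Real.pi * (1:ℕ) / K) * k) from
          funext fun k => by congr 1; push_cast; field_simp; ring]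
        exact sum_cos_zero_m K hK 1 le_rfl (by omega) _
      rw [s1, s2, s3]; ring
    rw [iInf_congr hconst, ciInf_const]
  -- upper bound: every element is ≤ C
  have hub : ∀ v ∈ {v : ℝ | ∃ α : ℝ × ℝ,
        v = ⨅ ψ : ℝ × ℝ × ℝ,
          ((K : ℝ) * (b₀ ^ 2 + b₁ ^ 2 + b₂ ^ 2) +
            2 * (b₀ * b₁ * ∑ k ∈ Finset.range K,
                    Real.cos ((ψ.2.1 - ψ.1) - (α.1 - 0) * (k : ℝ) * T) +
                 b₀ * b₂ * ∑ k ∈ Finset.range K,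
                    Real.cos ((ψ.2.2 - ψ.1) - (α.2 - 0) * (k : ℝ) * T) +
                 b₁ * b₂ * ∑ k ∈ Finset.range K,
                    Real.cos ((ψ.2.2 - ψ.2.1) - (α.2 - α.1) * (k : ℝ) * T)))}, v ≤ C := by
    rintro v ⟨⟨a₁, a₂⟩, rfl⟩
    set F : ℝ × ℝ × ℝ → ℝ := fun ψ =>
          ((K : ℝ) * (b₀ ^ 2 + b₁ ^ 2 + b₂ ^ 2) +
            2 * (b₀ * b₁ * ∑ k ∈ Finset.range K,
                    Real.cos ((ψ.2.1 - ψ.1) - (a₁ - 0) * (k : ℝ) * T) +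
                 b₀ * b₂ * ∑ k ∈ Finset.range K,
                    Real.cos ((ψ.2.2 - ψ.1) - (a₂ - 0) * (k : ℝ) * T) +
                 b₁ * b₂ * ∑ k ∈ Finset.range K,
                    Real.cos ((ψ.2.2 - ψ.2.1) - (a₂ - a₁) * (k : ℝ) * T))) with hF
    have hbdd : BddBelow (Set.range F) := by
      refine ⟨C - 2 * (b₀*b₁ + b₀*b₂ + b₁*b₂) * K, ?_⟩
      rintro x ⟨ψ, rfl⟩
      have t1 := neg_card_le_sum_cos K (fun k => (ψ.2.1 - ψ.1) - (a₁ - 0) * (k : ℝ) * T)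
      have t2 := neg_card_le_sum_cos K (fun k => (ψ.2.2 - ψ.1) - (a₂ - 0) * (k : ℝ) * T)
      have t3 := neg_card_le_sum_cos K (fun k => (ψ.2.2 - ψ.2.1) - (a₂ - a₁) * (k : ℝ) * T)
      simp only [hF]
      nlinarith [mul_nonneg hb₀ hb₁, mul_nonneg hb₀ hb₂, mul_nonneg hb₁ hb₂]
    have i1 := ciInf_le hbdd ((0:ℝ), (0:ℝ), (0:ℝ))
    have i2 := ciInf_le hbdd ((0:ℝ), (π:ℝ), (0:ℝ))
    have i3 := ciInf_le hbdd ((0:ℝ), (0:ℝ), (π:ℝ))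
    have i4 := ciInf_le hbdd ((0:ℝ), (π:ℝ), (π:ℝ))
    simp only [hF] at i1 i2 i3 i4
    have hA : (∑ k ∈ Finset.range K, Real.cos ((0:ℝ) - 0 - (a₁ - 0) * (k : ℝ) * T))
        + (∑ k ∈ Finset.range K, Real.cos ((π:ℝ) - 0 - (a₁ - 0) * (k : ℝ) * T)) = 0 := by
      rw [← Finset.sum_add_distrib]
      exact Finset.sum_eq_zero fun k _ => two_cos _
    have hB : (∑ k ∈ Finset.range K, Real.cos ((0:ℝ) - 0 - (a₂ - 0) * (k : ℝ) * T))
        + (∑ k ∈ Finset.range K, Real.cos ((π:ℝ) - 0 - (a₂ - 0) * (k : ℝ) * T)) = 0 := by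
      rw [← Finset.sum_add_distrib]
      exact Finset.sum_eq_zero fun k _ => two_cos _
    have hCC : (∑ k ∈ Finset.range K, Real.cos ((0:ℝ) - 0 - (a₂ - a₁) * (k : ℝ) * T))
        + (∑ k ∈ Finset.range K, Real.cos ((π:ℝ) - 0 - (a₂ - a₁) * (k : ℝ) * T))
        + (∑ k ∈ Finset.range K, Real.cos ((0:ℝ) - π - (a₂ - a₁) * (k : ℝ) * T))
        + (∑ k ∈ Finset.range K, Real.cos ((π:ℝ) - π - (a₂ - a₁) * (k : ℝ) * T)) = 0 := by
      rw [← Finset.sum_add_distrib, ← Finset.sum_add_distrib, ← Finset.sum_add_distrib]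
      exact Finset.sum_eq_zero fun k _ => four_cos _
    have hA2 : b₀ * b₁ * (∑ k ∈ Finset.range K, Real.cos ((0:ℝ) - 0 - (a₁ - 0) * (k : ℝ) * T))
        + b₀ * b₁ * (∑ k ∈ Finset.range K, Real.cos ((π:ℝ) - 0 - (a₁ - 0) * (k : ℝ) * T)) = 0 := by
      linear_combination b₀ * b₁ * hA
    have hB2 : b₀ * b₂ * (∑ k ∈ Finset.range K, Real.cos ((0:ℝ) - 0 - (a₂ - 0) * (k : ℝ) * T))
        + b₀ * b₂ * (∑ k ∈ Finset.range K, Real.cos ((π:ℝ) - 0 - (a₂ - 0) * (k : ℝ) * T)) = 0 := by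
      linear_combination b₀ * b₂ * hB
    have hC2 : b₁ * b₂ * (∑ k ∈ Finset.range K, Real.cos ((0:ℝ) - 0 - (a₂ - a₁) * (k : ℝ) * T))
        + b₁ * b₂ * (∑ k ∈ Finset.range K, Real.cos ((π:ℝ) - 0 - (a₂ - a₁) * (k : ℝ) * T))
        + b₁ * b₂ * (∑ k ∈ Finset.range K, Real.cos ((0:ℝ) - π - (a₂ - a₁) * (k : ℝ) * T))
        + b₁ * b₂ * (∑ k ∈ Finset.range K, Real.cos ((π:ℝ) - π - (a₂ - a₁) * (k : ℝ) * T)) = 0 := by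
      linear_combination b₁ * b₂ * hCC
    simp only [hF]
    linarith [i1, i2, i3, i4, hA2, hB2, hC2]
  exact le_antisymm (csSup_le ⟨C, hmem⟩ hub) (le_csSup ⟨C, hub⟩ hmem)
end

section
/- Let K > 1 and L ≥ 2 be integers, T > 0 a real, and let b_0, …, b_{L−1} be reals. Suppose α_0, …, α_{L−1} are reals such that (α_m − α_l)·T/2 ∈ X* for all 0 ≤ l < m ≤ L−1. Then for every ψ_0, …, ψ_{L−1} ∈ ℝ, ∑_{k=0}^{K−1} |∑_{l=0}^{L−1} b_l·exp(−i·(ψ_l − α_l·k·T))|² = K·∑_{l=0}^{L−1} b_l². In particular, the sum of the K squared effective channel gains is independent of the phase offsets ψ_l. -/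
open Real Finset Complex

/-- `X = {qπ : q ∈ ℤ}`. -/
def Xset : Set ℝ := {x | ∃ q : ℤ, x = (q : ℝ) * Real.pi}

/-- `X* = {qπ/K : q ∈ ℤ} \ X`. -/
def Xstar (K : ℕ) : Set ℝ :=
  {x | ∃ q : ℤ, x = (q : ℝ) * Real.pi / (K : ℝ)} \ Xset

lemma neg_mem_Xstar (K : ℕ) (x : ℝ) (h : x ∈ Xstar K) : -x ∈ Xstar K := by
  obtain ⟨⟨q, hq⟩, hn⟩ := h
  refine ⟨⟨-q, by push_cast; rw [hq]; ring⟩, ?_⟩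
  rintro ⟨q', hq'⟩
  exact hn ⟨-q', by push_cast; linarith⟩

lemma geom_zero (K : ℕ) (hK : 0 < K) (θ : ℝ) (h : θ / 2 ∈ Xstar K) :
    ∑ k ∈ Finset.range K, Complex.exp (Complex.I * θ) ^ k = 0 := by
  obtain ⟨⟨q, hq⟩, hnot⟩ := h
  have hKR : (K : ℝ) ≠ 0 := Nat.cast_ne_zero.2 hK.ne'
  have hθ : θ * K = 2 * q * Real.pi := by field_simp at hq; linarith
  have hr1 : Complex.exp (Complex.I * θ) ≠ 1 := by
    intro hc
    rw [Complex.exp_eq_one_iff] at hc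
    obtain ⟨n, hn⟩ := hc
    apply hnot
    refine ⟨n, ?_⟩
    have hI : (Complex.I : ℂ) ≠ 0 := Complex.I_ne_zero
    have h2 : (θ : ℂ) = n * (2 * Real.pi) := by
      have h4 : (θ : ℂ) * Complex.I = ((n : ℂ) * (2 * Real.pi)) * Complex.I := by
        rw [show (θ:ℂ) * Complex.I = Complex.I * θ by ring, hn]; ring
      exact mul_right_cancel₀ hI h4
    have h3 : θ = n * (2 * Real.pi) := by exact_mod_cast h2
    rw [h3]; ring
  have hrK : Complex.exp (Complex.I * θ) ^ K = 1 := by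
    rw [← Complex.exp_nat_mul]
    have h5 : (K : ℂ) * (Complex.I * θ) = q * (2 * Real.pi * Complex.I) := by
      have h6 : (θ : ℂ) * K = 2 * q * Real.pi := by exact_mod_cast hθ
      rw [show (K:ℂ) * (Complex.I * θ) = ((θ:ℂ) * K) * Complex.I by ring, h6]; ring
    rw [h5, Complex.exp_int_mul_two_pi_mul_I]
  rw [geom_sum_eq hr1, hrK, sub_self, zero_div]

/-- if the rates of phase shift satisfy `(α_m − α_l)·T/2 ∈ X*` for all
`l < m`, then `∑_{k=0}^{K−1} |∑_l b_l·exp(−i(ψ_l − α_l·k·T))|² = K·∑_l b_l²` for every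
choice of phase offsets `ψ`, i.e., the sum of the `K` squared effective channel gains
is independent of `ψ`. -/
theorem stmt_12 (K L : ℕ) (hK : 1 < K) (hL : 2 ≤ L) (T : ℝ) (hT : 0 < T)
    (b α : Fin L → ℝ)
    (hα : ∀ l m : Fin L, l < m → ((α m - α l) * T / 2) ∈ Xstar K) :
    ∀ ψ : Fin L → ℝ,
      ∑ k ∈ Finset.range K,
          (‖(∑ l, (b l : ℂ) *
            Complex.exp (-Complex.I * ((ψ l : ℂ) - (α l : ℂ) * (k : ℂ) * (T : ℂ))))‖) ^ 2 =
        (K : ℝ) * ∑ l, (b l) ^ 2 := by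
  intro ψ
  set a : Fin L → ℕ → ℂ := fun l k =>
    (b l : ℂ) * Complex.exp (-Complex.I * ((ψ l : ℂ) - (α l : ℂ) * (k : ℂ) * (T : ℂ))) with ha
  have hkey : ∀ l m : Fin L, ∀ k : ℕ,
      a l k * (starRingEnd ℂ) (a m k) =
      ((b l : ℂ) * (b m : ℂ)) * Complex.exp (Complex.I * ((ψ m : ℂ) - (ψ l : ℂ))) *
        Complex.exp (Complex.I * (((α l : ℝ) - α m) * T : ℝ)) ^ k := by
    intro l m k
    simp only [ha, map_mul, Complex.conj_ofReal, ← Complex.exp_conj, map_sub, map_neg, map_mul,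
      Complex.conj_I, Complex.conj_natCast, neg_neg]
    rw [← Complex.exp_nat_mul]
    rw [show (b l : ℂ) * Complex.exp (-Complex.I * ((ψ l:ℂ) - (α l:ℝ) * (k:ℕ) * (T:ℝ))) *
        ((b m : ℂ) * Complex.exp (Complex.I * ((ψ m:ℂ) - (α m:ℝ) * (k:ℕ) * (T:ℝ)))) =
        ((b l:ℂ) * (b m:ℂ)) * Complex.exp (-Complex.I * ((ψ l:ℂ) - (α l:ℝ) * (k:ℕ) * (T:ℝ)) +
          Complex.I * ((ψ m:ℂ) - (α m:ℝ) * (k:ℕ) * (T:ℝ))) from by rw [Complex.exp_add]; ring]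
    rw [show ((b l:ℂ) * (b m:ℂ)) * Complex.exp (Complex.I * ((ψ m:ℂ) - (ψ l:ℂ))) *
        Complex.exp ((k:ℕ) * (Complex.I * (((α l:ℝ) - α m) * T : ℝ))) =
        ((b l:ℂ) * (b m:ℂ)) * Complex.exp (Complex.I * ((ψ m:ℂ) - (ψ l:ℂ)) +
          (k:ℕ) * (Complex.I * (((α l:ℝ) - α m) * T : ℝ))) from by rw [Complex.exp_add]; ring]
    congr 1
    push_cast
    ring
  have hinner : ∀ l m : Fin L,
      ∑ k ∈ Finset.range K, a l k * (starRingEnd ℂ) (a m k) =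
      if l = m then (b l : ℂ) ^ 2 * K else 0 := by
    intro l m
    simp only [hkey, ← Finset.mul_sum]
    by_cases h : l = m
    · subst h
      simp [Finset.sum_const, sq]
    · rw [if_neg h]
      have hz : ∑ k ∈ Finset.range K,
          Complex.exp (Complex.I * (((α l : ℝ) - α m) * T : ℝ)) ^ k = 0 := by
        apply geom_zero K (by omega)
        rcases lt_or_gt_of_ne h with hlm | hml
        · have h2 := neg_mem_Xstar K _ (hα l m hlm)
          rw [show ((α l - α m) * T) / 2 = -((α m - α l) * T / 2) by ring]
          exact h2
        · exact hα m l hml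
      rw [hz, mul_zero]
  calc ∑ k ∈ Finset.range K, (‖∑ l, a l k‖) ^ 2
      = (∑ k ∈ Finset.range K, (∑ l, a l k) * (starRingEnd ℂ) (∑ l, a l k)).re := by
        rw [Complex.re_sum]
        refine Finset.sum_congr rfl fun k _ => ?_
        rw [Complex.mul_conj]
        simp [Complex.sq_norm]
    _ = (∑ k ∈ Finset.range K, ∑ l, ∑ m, a l k * (starRingEnd ℂ) (a m k)).re := by
        congr 1
        refine Finset.sum_congr rfl fun k _ => ?_
        rw [map_sum, Finset.sum_mul_sum]
    _ = (∑ l, ∑ m, ∑ k ∈ Finset.range K, a l k * (starRingEnd ℂ) (a m k)).re := by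
        congr 1
        rw [Finset.sum_comm]
        refine Finset.sum_congr rfl fun l _ => Finset.sum_comm
    _ = (((K : ℝ) * ∑ l, (b l) ^ 2 : ℝ) : ℂ).re := by
        congr 1
        simp only [hinner, Finset.sum_ite_eq, Finset.mem_univ, if_true]
        push_cast
        rw [← Finset.sum_mul, mul_comm]
    _ = (K : ℝ) * ∑ l, (b l) ^ 2 := Complex.ofReal_re _
end
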